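/- arXiv:cs/0508087 — 2 statements merged into one kernel-verified Lean document; each statement's English description precedes it below -/
import Mathlib

section
/- Let G be a finite directed multigraph in which every vertex satisfies F⁺(v) = F⁻(v) and there is at least one edge with positive multiplicity. Then starting from any vertex x with F⁺(x) > 0, there exists a closed path starting and ending at x that uses each edge e at most f(e) times and has positive length. -/
open Finset

/-- A path: a list of edges where the target of each edge equals the source of the next. -/
def IsPath {α : Type*} (p : List (α × α)) : Prop :=
  p.Chain' (fun e e' => e.2 = e'.1)

/-- An Eulerian path in the directed multigraph with edge set `E` and multiplicities `f`:
a path whose edges all lie in `E` and which uses each edge `e ∈ E` exactly `f e` times. -/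
def IsEulerian {α : Type*} [DecidableEq α] (E : Finset (α × α)) (f : α × α → ℕ)
    (p : List (α × α)) : Prop :=
  IsPath p ∧ (∀ e ∈ p, e ∈ E) ∧ (∀ e ∈ E, p.count e = f e)

/-- Out-degree of `v` counted with multiplicity. -/
def Fplus {α : Type*} [DecidableEq α] (E : Finset (α × α)) (f : α × α → ℕ) (v : α) : ℕ :=
  ∑ e ∈ E.filter (fun e => e.1 = v), f e

/-- In-degree of `v` counted with multiplicity. -/
def Fminus {α : Type*} [DecidableEq α] (E : Finset (α × α)) (f : α × α → ℕ) (v : α) : ℕ :=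
  ∑ e ∈ E.filter (fun e => e.2 = v), f e

/-- Two vertices are directly linked if some edge of `E` joins them in either direction. -/
def LinkRel {α : Type*} (E : Finset (α × α)) (a b : α) : Prop :=
  (a, b) ∈ E ∨ (b, a) ∈ E

/-- The multigraph is connected: any two vertices are joined by a chain
(a sequence of edges, directions ignored). -/
def ConnectedGraph {α : Type*} (V : Finset α) (E : Finset (α × α)) : Prop :=
  ∀ a ∈ V, ∀ b ∈ V, Relation.ReflTransGen (LinkRel E) a b

lemma filterLen_eq_sum {α : Type*} [DecidableEq α] [BEq α] [LawfulBEq α] (p : List α) (s : Finset α) :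
    (p.filter (fun a => a ∈ s)).length = ∑ e ∈ s, p.count e := by
  induction p with
  | nil => simp
  | cons a p ih =>
    simp only [List.filter_cons, List.count_cons]
    rw [Finset.sum_add_distrib, ← ih]
    by_cases h : a ∈ s
    · simp [h, Finset.sum_ite_eq' s a (fun _ => 1)]
    · have h0 : ∀ e ∈ s, (if (a == e) = true then 1 else 0) = 0 := by
        intro e he
        simp only [beq_iff_eq]
        rw [if_neg]
        intro hh
        exact h (hh ▸ he)
      simp [h, Finset.sum_eq_zero h0]

lemma chain_count {α : Type*} [DecidableEq α] (p : List (α × α)) (hp : IsPath p)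
    (h : p ≠ []) (w : α) :
    (p.filter (fun e => e.1 = w)).length + (if (p.getLast h).2 = w then 1 else 0)
      = (p.filter (fun e => e.2 = w)).length + (if (p.head h).1 = w then 1 else 0) := by
  induction p with
  | nil => exact absurd rfl h
  | cons e rest ih =>
    cases rest with
    | nil =>
      simp only [List.filter_cons, List.getLast_singleton, List.head_cons]
      split_ifs <;> simp_all
    | cons a t =>
      have hp' : IsPath (a :: t) := (List.isChain_cons_cons.mp hp).2
      have hea : e.2 = a.1 := (List.isChain_cons_cons.mp hp).1
      have ih' := ih hp' (by simp)
      simp only [List.filter_cons, List.getLast_cons (l := a :: t) (by simp), List.head_cons] at *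
      split_ifs at * <;> simp_all

lemma extend_or_close {α : Type*} [DecidableEq α] (E : Finset (α × α)) (f : α × α → ℕ)
    (hbal : ∀ v : α, Fplus E f v = Fminus E f v) (x : α) :
    ∀ n : ℕ, ∀ p : List (α × α), ∀ h : p ≠ [], IsPath p → (∀ e ∈ p, e ∈ E) →
    (∀ e ∈ E, p.count e ≤ f e) → (p.head h).1 = x →
    (∑ e ∈ E, (f e - p.count e)) ≤ n →
    ∃ q : List (α × α), ∃ hq : q ≠ [],
      IsPath q ∧ (∀ e ∈ q, e ∈ E) ∧ (∀ e ∈ E, q.count e ≤ f e) ∧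
      (q.head hq).1 = x ∧ (q.getLast hq).2 = x := by
  intro n
  induction n with
  | zero =>
    intro p h hp hpE hcnt hhead hm
    by_cases hv : (p.getLast h).2 = x
    · exact ⟨p, h, hp, hpE, hcnt, hhead, hv⟩
    · exfalso
      -- there exists an unused out-edge at v, contradicting measure 0
      set v := (p.getLast h).2 with hvdef
      have hex : ∃ e ∈ E, e.1 = v ∧ p.count e < f e := by
        by_contra hno
        push_neg at hno
        have hout : (p.filter (fun e => e.1 = v)).length = Fplus E f v := by
          have h1 : p.filter (fun e => e.1 = v)
              = p.filter (fun e => e ∈ E.filter (fun e => e.1 = v)) := by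
            apply List.filter_congr
            intro e he
            simp [Finset.mem_filter, hpE e he]
          rw [h1, filterLen_eq_sum, Fplus]
          apply Finset.sum_congr rfl
          intro e he
          simp only [Finset.mem_filter] at he
          exact le_antisymm (hcnt e he.1) (hno e he.1 he.2)
        have hin : (p.filter (fun e => e.2 = v)).length ≤ Fminus E f v := by
          have h1 : p.filter (fun e => e.2 = v)
              = p.filter (fun e => e ∈ E.filter (fun e => e.2 = v)) := by
            apply List.filter_congr
            intro e he
            simp [Finset.mem_filter, hpE e he]
          rw [h1, filterLen_eq_sum, Fminus]
          apply Finset.sum_le_sum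
          intro e he
          simp only [Finset.mem_filter] at he
          exact hcnt e he.1
        have hcc := chain_count p hp h v
        rw [if_pos rfl, hhead, if_neg (fun hh => hv hh.symm)] at hcc
        have := hbal v
        omega
      obtain ⟨e, heE, -, hlt⟩ := hex
      have key : f e - p.count e ≤ ∑ e' ∈ E, (f e' - p.count e') :=
        Finset.single_le_sum (f := fun e' => f e' - p.count e') (fun i _ => Nat.zero_le _) heE
      omega
  | succ n ih =>
    intro p h hp hpE hcnt hhead hm
    by_cases hv : (p.getLast h).2 = x
    · exact ⟨p, h, hp, hpE, hcnt, hhead, hv⟩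
    · set v := (p.getLast h).2 with hvdef
      have hex : ∃ e ∈ E, e.1 = v ∧ p.count e < f e := by
        by_contra hno
        push_neg at hno
        have hout : (p.filter (fun e => e.1 = v)).length = Fplus E f v := by
          have h1 : p.filter (fun e => e.1 = v)
              = p.filter (fun e => e ∈ E.filter (fun e => e.1 = v)) := by
            apply List.filter_congr
            intro e he
            simp [Finset.mem_filter, hpE e he]
          rw [h1, filterLen_eq_sum, Fplus]
          apply Finset.sum_congr rfl
          intro e he
          simp only [Finset.mem_filter] at he
          exact le_antisymm (hcnt e he.1) (hno e he.1 he.2)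
        have hin : (p.filter (fun e => e.2 = v)).length ≤ Fminus E f v := by
          have h1 : p.filter (fun e => e.2 = v)
              = p.filter (fun e => e ∈ E.filter (fun e => e.2 = v)) := by
            apply List.filter_congr
            intro e he
            simp [Finset.mem_filter, hpE e he]
          rw [h1, filterLen_eq_sum, Fminus]
          apply Finset.sum_le_sum
          intro e he
          simp only [Finset.mem_filter] at he
          exact hcnt e he.1
        have hcc := chain_count p hp h v
        rw [if_pos rfl, hhead, if_neg (fun hh => hv hh.symm)] at hcc
        have := hbal v
        omega
      obtain ⟨e, heE, he1, hlt⟩ := hex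
      have hcq : ∀ e' : α × α, (p ++ [e]).count e' = p.count e' + (if e' = e then 1 else 0) := by
        intro e'
        simp only [List.count_append, List.count_singleton, beq_iff_eq]
        by_cases hh : e' = e
        · simp [hh]
        · simp [hh, Ne.symm hh]
      refine ih (p ++ [e]) (by simp) ?_ ?_ ?_ ?_ ?_
      · rw [IsPath, List.Chain', List.isChain_append]
        refine ⟨hp, List.isChain_singleton e, ?_⟩
        intro a ha b hb
        obtain ⟨_, ha'⟩ := List.mem_getLast?_eq_getLast ha
        simp only [List.head?_cons, Option.mem_some_iff] at hb
        rw [ha', ← hb]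
        exact he1.symm
      · intro e' he'
        simp only [List.mem_append, List.mem_singleton] at he'
        rcases he' with h1 | h1
        · exact hpE e' h1
        · exact h1 ▸ heE
      · intro e' he'
        rw [hcq e']
        split_ifs with hh
        · rw [hh]; omega
        · simpa using hcnt e' he'
      · rw [List.head_append_left h]
        exact hhead
      · have hdec : ∑ e' ∈ E, (f e' - (p ++ [e]).count e') < ∑ e' ∈ E, (f e' - p.count e') := by
          apply Finset.sum_lt_sum
          · intro i _
            rw [hcq i]
            split_ifs <;> omega
          · refine ⟨e, heE, ?_⟩
            rw [hcq e, if_pos rfl]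
            omega
        omega

theorem stmt17 {α : Type*} [DecidableEq α] (E : Finset (α × α)) (f : α × α → ℕ)
    (hbal : ∀ v : α, Fplus E f v = Fminus E f v)
    (x : α) (hx : 0 < Fplus E f x) :
    ∃ p : List (α × α), ∃ h : p ≠ [],
      IsPath p ∧ (∀ e ∈ p, e ∈ E) ∧ (∀ e ∈ E, p.count e ≤ f e) ∧
      (p.head h).1 = x ∧ (p.getLast h).2 = x := by
  have hex : ∃ e ∈ E, e.1 = x ∧ 0 < f e := by
    by_contra hno
    push_neg at hno
    have : Fplus E f x = 0 := by
      rw [Fplus]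
      apply Finset.sum_eq_zero
      intro e he
      simp only [Finset.mem_filter] at he
      exact Nat.le_zero.mp (hno e he.1 he.2)
    omega
  obtain ⟨e, heE, he1, hf⟩ := hex
  apply extend_or_close E f hbal x (∑ e' ∈ E, f e') [e] (by simp)
  · exact List.isChain_singleton e
  · intro e' he'
    simp at he'
    exact he' ▸ heE
  · intro e' he'
    by_cases hh : e' = e
    · subst hh
      simpa [List.count_singleton, Nat.one_le_iff_ne_zero, Nat.pos_iff_ne_zero] using hf
    · simp [List.count_singleton, Ne.symm hh, hh]
  · simpa using he1
  · exact Finset.sum_le_sum (fun i _ => Nat.sub_le _ _)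
end

section
/- Let G be a finite connected directed multigraph with F⁺(v) = F⁻(v) for all vertices v, and let P be a path in G of maximal length among paths using each edge e at most f(e) times. If P is strictly shorter than the total multiplicity Σ_{e∈E} f(e), then there exists an edge (x,y) with f(x,y) strictly greater than the number of occurrences of (x,y) in P, such that x appears as an endpoint of some edge occurring in P. -/
open Finset

lemma sum_count_aux19 {β : Type*} [DecidableEq β] [BEq β] [LawfulBEq β] (l : List β)
    (s : Finset β) (h : ∀ e ∈ l, e ∈ s) : ∑ e ∈ s, l.count e = l.length := by
  induction l with
  | nil => simp
  | cons a l ih =>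
    have hs : ∀ e ∈ l, e ∈ s := fun e he => h e (List.mem_cons_of_mem a he)
    have ha : a ∈ s := h a List.mem_cons_self
    simp only [List.count_cons, Finset.sum_add_distrib, ih hs, List.length_cons]
    congr 1
    simp only [beq_iff_eq]
    rw [Finset.sum_ite_eq s a (fun _ => 1)]
    simp [ha]

theorem stmt19 {α : Type*} [DecidableEq α] (V : Finset α) (E : Finset (α × α))
    (f : α × α → ℕ) (hE : ∀ e ∈ E, e.1 ∈ V ∧ e.2 ∈ V)
    (hf : ∀ e ∈ E, 1 ≤ f e)
    (hconn : ConnectedGraph V E)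
    (hbal : ∀ v : α, Fplus E f v = Fminus E f v)
    (P : List (α × α)) (hP : IsPath P) (hPE : ∀ e ∈ P, e ∈ E)
    (hcount : ∀ e ∈ E, P.count e ≤ f e)
    (hmax : ∀ Q : List (α × α), IsPath Q → (∀ e ∈ Q, e ∈ E) →
      (∀ e ∈ E, Q.count e ≤ f e) → Q.length ≤ P.length)
    (hlt : P.length < ∑ e ∈ E, f e) :
    ∃ x y : α, (x, y) ∈ E ∧ P.count (x, y) < f (x, y) ∧
      ∃ e ∈ P, e.1 = x ∨ e.2 = x := by
  classical
  -- length as sum of counts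
  have hsub : P.toFinset ⊆ E := fun e he => hPE e (List.mem_toFinset.mp he)
  have hlen : ∑ e ∈ E, P.count e = P.length := sum_count_aux19 P E hPE
  -- a deficient edge exists
  have hdef : ∃ e ∈ E, P.count e < f e := by
    by_contra h
    push_neg at h
    exact absurd (Finset.sum_le_sum h) (by omega)
  -- P is nonempty
  have hPne : P ≠ [] := by
    intro hnil
    obtain ⟨e0, he0, hd0⟩ := hdef
    have h1 : ([e0] : List (α × α)).length ≤ P.length :=
      hmax [e0] (List.isChain_singleton e0) (by simpa using he0)
        (by
          intro e he
          rcases eq_or_ne e e0 with rfl | hne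
          · simpa using Nat.one_le_iff_ne_zero.mpr (by omega)
          · simp [List.count_singleton, hne, Ne.symm hne])
    simp [hnil] at h1
  by_contra hcon
  push_neg at hcon
  set touch : α → Prop := fun x => ∃ e ∈ P, e.1 = x ∨ e.2 = x with htouch
  have claimA : ∀ e ∈ E, touch e.1 → P.count e = f e := by
    rintro ⟨a, b⟩ he ⟨e', he', h'⟩
    by_contra hne
    have h2 := hcon a b he (lt_of_le_of_ne (hcount _ he) hne) e' he'
    rcases h' with h' | h'
    exacts [h2.1 h', h2.2 h']
  -- touched vertex set
  set Vt : Finset α := P.toFinset.image Prod.fst ∪ P.toFinset.image Prod.snd with hVtdef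
  have hVt : ∀ x, x ∈ Vt ↔ touch x := by
    intro x
    simp only [hVtdef, Finset.mem_union, Finset.mem_image, List.mem_toFinset, htouch]
    constructor
    · rintro (⟨e, he, rfl⟩ | ⟨e, he, rfl⟩)
      exacts [⟨e, he, Or.inl rfl⟩, ⟨e, he, Or.inr rfl⟩]
    · rintro ⟨e, he, rfl | rfl⟩
      exacts [Or.inl ⟨e, he, rfl⟩, Or.inr ⟨e, he, rfl⟩]
  -- fiberwise sums
  have hfib : ∀ g : α × α → α, (∀ v : α, Fplus E f v = ∑ e ∈ E.filter (fun e => g e = v), f e) →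
      ∑ v ∈ Vt, Fplus E f v = ∑ e ∈ E.filter (fun e => g e ∈ Vt), f e := by
    intro g hg
    rw [← Finset.sum_fiberwise_of_maps_to (g := g)
      (fun e he => (Finset.mem_filter.mp he).2) f]
    refine Finset.sum_congr rfl (fun v hv => ?_)
    rw [hg v]
    congr 1
    rw [Finset.filter_filter]
    refine Finset.filter_congr (fun e _ => ?_)
    constructor
    · exact fun h => ⟨h ▸ hv, h⟩
    · exact fun h => h.2
  have h1 : ∑ v ∈ Vt, Fplus E f v = ∑ e ∈ E.filter (fun e => e.1 ∈ Vt), f e :=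
    hfib Prod.fst (fun v => rfl)
  have h2 : ∑ v ∈ Vt, Fminus E f v = ∑ e ∈ E.filter (fun e => e.2 ∈ Vt), f e := by
    rw [← Finset.sum_fiberwise_of_maps_to (g := Prod.snd)
      (fun e he => (Finset.mem_filter.mp he).2) f]
    refine Finset.sum_congr rfl (fun v hv => ?_)
    show Fminus E f v = _
    unfold Fminus
    congr 1
    rw [Finset.filter_filter]
    refine Finset.filter_congr (fun e _ => ?_)
    constructor
    · exact fun h => ⟨h ▸ hv, h⟩
    · exact fun h => h.2
  -- sums of counts over the two filters equal P.length
  have hcountsum : ∀ s : Finset (α × α), P.toFinset ⊆ s → s ⊆ E →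
      ∑ e ∈ s, P.count e = P.length := by
    intro s hs1 _
    exact sum_count_aux19 P s (fun e he => hs1 (List.mem_toFinset.mpr he))
  have hsubsrc : P.toFinset ⊆ E.filter (fun e => e.1 ∈ Vt) := by
    intro e he
    rw [Finset.mem_filter, hVt]
    exact ⟨hsub he, ⟨e, List.mem_toFinset.mp he, Or.inl rfl⟩⟩
  have hsubtgt : P.toFinset ⊆ E.filter (fun e => e.2 ∈ Vt) := by
    intro e he
    rw [Finset.mem_filter, hVt]
    exact ⟨hsub he, ⟨e, List.mem_toFinset.mp he, Or.inr rfl⟩⟩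
  have hsrcf : ∑ e ∈ E.filter (fun e => e.1 ∈ Vt), f e = P.length := by
    rw [← hcountsum _ hsubsrc (Finset.filter_subset _ _)]
    refine Finset.sum_congr rfl (fun e he => ?_)
    rw [Finset.mem_filter, hVt] at he
    exact (claimA e he.1 he.2).symm
  have htgtcount : ∑ e ∈ E.filter (fun e => e.2 ∈ Vt), P.count e = P.length :=
    hcountsum _ hsubtgt (Finset.filter_subset _ _)
  have hbalsum : ∑ v ∈ Vt, Fplus E f v = ∑ v ∈ Vt, Fminus E f v :=
    Finset.sum_congr rfl (fun v _ => hbal v)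
  have htgtf : ∑ e ∈ E.filter (fun e => e.2 ∈ Vt), f e = P.length := by
    omega
  have claimB : ∀ e ∈ E, touch e.2 → P.count e = f e := by
    have key := (Finset.sum_eq_sum_iff_of_le
      (s := E.filter (fun e => e.2 ∈ Vt)) (f := fun e => P.count e) (g := f)
      (fun e he => hcount e (Finset.mem_filter.mp he).1)).mp (by omega)
    intro e he ht
    exact key e (Finset.mem_filter.mpr ⟨he, (hVt e.2).mpr ht⟩)
  -- touch is invariant under LinkRel
  have hmem : ∀ e ∈ E, P.count e = f e → e ∈ P := by
    intro e he hc
    have := hf e he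
    exact List.count_pos_iff.mp (by omega)
  have hstep : ∀ a b, LinkRel E a b → (touch a ↔ touch b) := by
    intro a b hab
    rcases hab with h | h
    · constructor
      · intro ha
        have := hmem _ h (claimA (a, b) h ha)
        exact ⟨(a, b), this, Or.inr rfl⟩
      · intro hb
        have := hmem _ h (claimB (a, b) h hb)
        exact ⟨(a, b), this, Or.inl rfl⟩
    · constructor
      · intro ha
        have := hmem _ h (claimB (b, a) h ha)
        exact ⟨(b, a), this, Or.inl rfl⟩
      · intro hb
        have := hmem _ h (claimA (b, a) h hb)
        exact ⟨(b, a), this, Or.inr rfl⟩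
  -- final contradiction via connectedness
  obtain ⟨e0, he0, hd0⟩ := hdef
  have hnt : ¬ touch e0.1 := by
    rintro ⟨e', he', h'⟩
    have h2 := hcon e0.1 e0.2 he0 hd0 e' he'
    rcases h' with h' | h'
    exacts [h2.1 h', h2.2 h']
  obtain ⟨e1, he1⟩ := List.exists_mem_of_ne_nil P hPne
  have ht1 : touch e1.1 := ⟨e1, he1, Or.inl rfl⟩
  have hchain := hconn e0.1 (hE e0 he0).1 e1.1 (hE e1 (hPE e1 he1)).1
  have hiff : ∀ a b : α, Relation.ReflTransGen (LinkRel E) a b → (touch a ↔ touch b) := by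
    intro a b hab
    induction hab with
    | refl => exact Iff.rfl
    | tail _ step ih => exact ih.trans (hstep _ _ step)
  exact hnt ((hiff _ _ hchain).mpr ht1)
end
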